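/- There exist a ∈ (0,1) and b ∈ ℕ such that for every x ∈ (0,1], every strictly increasing sequence (s_j) of positive integers, and every sequence (r_j) with values in {-1,1}, the function y ↦ |Σ_{j=0}^∞ r_j a^{s_j} (cos(b^{s_j} π y) − cos(b^{s_j} π x)) / (y − x)| is unbounded as y ranges over [0,1] \ {x}. -/

import Mathlib

set_option maxHeartbeats 1000000

open Set Real Finset

private lemma sm_add_le (s : ℕ → ℕ) (hs : StrictMono s) (i k : ℕ) : s i + k ≤ s (i + k) := by
  induction k with
  | zero => simp
  | succ n ih =>
    have h2 : s (i + n) < s (i + (n + 1)) := hs (by omega)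
    omega

private lemma cos_diff_le (u v : ℝ) : |Real.cos u - Real.cos v| ≤ |u - v| := by
  rw [Real.cos_sub_cos]
  have h1 : |Real.sin ((u + v) / 2)| ≤ 1 := Real.abs_sin_le_one _
  have h2 : |Real.sin ((u - v) / 2)| ≤ |(u - v) / 2| := Real.abs_sin_le_abs
  have h0 : (0:ℝ) ≤ |Real.sin ((u - v) / 2)| := abs_nonneg _
  calc |(-2) * Real.sin ((u + v) / 2) * Real.sin ((u - v) / 2)|
      = 2 * (|Real.sin ((u + v) / 2)| * |Real.sin ((u - v) / 2)|) := by
        rw [abs_mul, abs_mul]; norm_num [mul_assoc]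
    _ ≤ 2 * (1 * |(u - v) / 2|) := by gcongr
    _ = |u - v| := by
        rw [abs_div, show |(2:ℝ)| = 2 from abs_of_pos two_pos]; ring

private lemma cos_int_pi (n : ℤ) : Real.cos ((n:ℝ) * π) = (-1:ℝ) ^ n := by
  have := Real.cos_int_mul_pi_sub 0 n
  simpa using this

theorem stmt6 : ∃ a ∈ Ioo (0:ℝ) 1, ∃ b : ℕ,
    ∀ x ∈ Ioc (0:ℝ) 1, ∀ s : ℕ → ℕ, StrictMono s → (∀ j, 0 < s j) →
    ∀ r : ℕ → ℝ, (∀ j, r j = -1 ∨ r j = 1) →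
    ∀ B : ℝ, ∃ y ∈ Icc (0:ℝ) 1, y ≠ x ∧
      B < |(∑' j : ℕ, r j * a ^ s j *
              (Real.cos ((b : ℝ) ^ s j * π * y) - Real.cos ((b : ℝ) ^ s j * π * x))) /
            (y - x)| := by
  refine ⟨1/14, ⟨by norm_num, by norm_num⟩, 147, ?_⟩
  intro x hx s hs hs0 r hr B
  have habsr : ∀ j, |r j| = 1 := by
    intro j; rcases hr j with h | h <;> rw [h] <;> norm_num
  -- choose the index J
  obtain ⟨J, hJ⟩ := pow_unbounded_of_one_lt (B / (1/50)) (show (1:ℝ) < 21/2 by norm_num)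
  have hB : B < 1/50 * (21/2 : ℝ) ^ J := by
    have := (div_lt_iff₀ (by norm_num : (0:ℝ) < 1/50)).mp hJ
    linarith
  set m := s J with hm
  have hJm : J ≤ m := hs.le_apply
  have hBm : B < 1/50 * (21/2 : ℝ) ^ m := by
    have : (21/2:ℝ) ^ J ≤ (21/2) ^ m := pow_le_pow_right₀ (by norm_num) hJm
    linarith
  -- the point y
  set bm : ℝ := 147 ^ m with hbm
  have hbm0 : (0:ℝ) < bm := by positivity
  have hbm1 : (1:ℝ) ≤ bm := one_le_pow₀ (by norm_num)
  set A : ℤ := round (bm * x) with hA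
  set ε : ℝ := bm * x - A with hε
  have hεle : |ε| ≤ 1/2 := abs_sub_round (bm * x)
  have hεle' := abs_le.mp hεle
  have hxpos : 0 < x := hx.1
  have hbmx0 : 0 < bm * x := mul_pos hbm0 hxpos
  have hbmx1 : bm * x ≤ bm := by nlinarith [hx.2]
  have hA0 : 0 ≤ A := by
    by_contra h
    push_neg at h
    have h1 : (A:ℝ) ≤ -1 := by exact_mod_cast (show A ≤ -1 by omega)
    have h2 : ε ≥ 1 := by rw [hε]; linarith
    linarith [hεle'.2]
  have hA1 : (A:ℝ) ≤ bm := by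
    have hcast : ((147:ℤ)^m : ℝ) = bm := by rw [hbm]; push_cast; ring
    have h2 : (A:ℝ) < ((147:ℤ)^m : ℝ) + 1 := by rw [hcast]; linarith [hεle'.1]
    have h3 : A < (147:ℤ)^m + 1 := by exact_mod_cast h2
    have h4 : A ≤ (147:ℤ)^m := by omega
    calc (A:ℝ) ≤ ((147:ℤ)^m : ℝ) := by exact_mod_cast h4
      _ = bm := hcast
  set η : ℤ := if 1 ≤ A then -1 else 1 with hηdef
  have hηcase : (1 ≤ A ∧ η = -1) ∨ (A = 0 ∧ η = 1) := by
    by_cases h : 1 ≤ A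
    · exact Or.inl ⟨h, by rw [hηdef, if_pos h]⟩
    · exact Or.inr ⟨by omega, by rw [hηdef, if_neg h]⟩
  set y : ℝ := ((A + η : ℤ) : ℝ) / bm with hy
  have hy01 : y ∈ Icc (0:ℝ) 1 := by
    constructor
    · apply div_nonneg _ hbm0.le
      rcases hηcase with ⟨h1, h2⟩ | ⟨h1, h2⟩ <;> rw [h2] <;> push_cast
      · have : (1:ℝ) ≤ (A:ℝ) := by exact_mod_cast h1
        linarith
      · rw [h1]; norm_num
    · rw [div_le_one hbm0]
      rcases hηcase with ⟨h1, h2⟩ | ⟨h1, h2⟩ <;> rw [h2] <;> push_cast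
      · linarith
      · rw [h1]; push_cast; linarith
  -- difference y - x
  have hyx : y - x = ((η:ℝ) - ε) / bm := by
    rw [hy, hε]
    field_simp
    push_cast
    ring
  have hηε1 : 1/2 ≤ |(η:ℝ) - ε| := by
    rcases hηcase with ⟨_, h⟩ | ⟨_, h⟩ <;> rw [h] <;> push_cast
    · calc (1:ℝ)/2 ≤ -((-1:ℝ) - ε) := by linarith [hεle'.1]
        _ ≤ |(-1:ℝ) - ε| := neg_le_abs _
    · calc (1:ℝ)/2 ≤ 1 - ε := by linarith [hεle'.2]
        _ ≤ |(1:ℝ) - ε| := le_abs_self _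
  have hηε2 : |(η:ℝ) - ε| ≤ 3/2 := by
    have hηabs : |(η:ℝ)| = 1 := by
      rcases hηcase with ⟨_, h⟩ | ⟨_, h⟩ <;> rw [h] <;> norm_num
    calc |(η:ℝ) - ε| ≤ |(η:ℝ)| + |ε| := abs_sub _ _
      _ ≤ 1 + 1/2 := by rw [hηabs]; linarith
      _ = 3/2 := by norm_num
  have hd0 : 0 < |y - x| := by
    rw [hyx, abs_div, abs_of_pos hbm0]
    have : (0:ℝ) < |(η:ℝ) - ε| := lt_of_lt_of_le (by norm_num) hηε1
    positivity
  have hdle : |y - x| ≤ 3/2 / bm := by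
    rw [hyx, abs_div, abs_of_pos hbm0]
    gcongr
  have hyne : y ≠ x := by
    intro h; rw [h, sub_self, abs_zero] at hd0; exact lt_irrefl _ hd0
  refine ⟨y, hy01, hyne, ?_⟩
  push_cast
  set g : ℕ → ℝ := fun j => r j * (1/14:ℝ) ^ s j *
      (Real.cos ((147:ℝ) ^ s j * π * y) - Real.cos ((147:ℝ) ^ s j * π * x)) with hg
  -- basic bounds
  have hgb : ∀ j, |g j| ≤ 2 * (1/14:ℝ) ^ s j := by
    intro j
    simp only [hg]
    rw [abs_mul, abs_mul, habsr, one_mul,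
      abs_of_pos (by positivity : (0:ℝ) < (1/14:ℝ) ^ s j)]
    have h2 : |Real.cos ((147:ℝ) ^ s j * π * y) - Real.cos ((147:ℝ) ^ s j * π * x)| ≤ 2 := by
      calc |Real.cos ((147:ℝ) ^ s j * π * y) - Real.cos ((147:ℝ) ^ s j * π * x)|
          ≤ |Real.cos ((147:ℝ) ^ s j * π * y)| + |Real.cos ((147:ℝ) ^ s j * π * x)| :=
            abs_sub _ _
        _ ≤ 1 + 1 := add_le_add (Real.abs_cos_le_one _) (Real.abs_cos_le_one _)
        _ = 2 := by norm_num
    nlinarith [pow_pos (show (0:ℝ) < 1/14 by norm_num) (s j), abs_nonneg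
      (Real.cos ((147:ℝ) ^ s j * π * y) - Real.cos ((147:ℝ) ^ s j * π * x))]
  have hsumg : Summable g := by
    apply Summable.of_norm_bounded (g := fun j => 2 * (1/14:ℝ) ^ j)
      ((summable_geometric_of_lt_one (by norm_num) (by norm_num)).mul_left 2)
    intro j
    rw [Real.norm_eq_abs]
    refine (hgb j).trans ?_
    have : (1/14:ℝ) ^ s j ≤ (1/14) ^ j :=
      pow_le_pow_of_le_one (by norm_num) (by norm_num) hs.le_apply
    linarith
  -- main term
  have hbm' : (147:ℝ) ^ m = bm := hbm.symm
  have hcosy : Real.cos ((147:ℝ) ^ m * π * y) = -(-1:ℝ) ^ A := by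
    have h1 : (147:ℝ) ^ m * π * y = ((A + η : ℤ) : ℝ) * π := by
      rw [hy, hbm']; field_simp
    rw [h1, cos_int_pi]
    have h2 : ((-1:ℝ)) ^ (A + η) = (-1:ℝ) ^ A * (-1:ℝ) ^ η :=
      zpow_add₀ (by norm_num : (-1:ℝ) ≠ 0) A η
    rw [h2]
    rcases hηcase with ⟨_, h⟩ | ⟨_, h⟩ <;> rw [h] <;> norm_num
  have hcosx : Real.cos ((147:ℝ) ^ m * π * x) = (-1:ℝ) ^ A * Real.cos (ε * π) := by
    have h1 : (147:ℝ) ^ m * π * x = (A:ℝ) * π + ε * π := by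
      rw [hε, hbm']; ring
    rw [h1, Real.cos_add, Real.sin_int_mul_pi, zero_mul, sub_zero, cos_int_pi]
  have hcosε0 : 0 ≤ Real.cos (ε * π) := by
    apply Real.cos_nonneg_of_mem_Icc
    constructor
    · nlinarith [Real.pi_pos, hεle'.1]
    · nlinarith [Real.pi_pos, hεle'.2]
  have hgJ : (1/14:ℝ) ^ m ≤ |g J| := by
    simp only [hg]
    rw [← hm, hcosy, hcosx]
    have hΔ : -(-1:ℝ) ^ A - (-1:ℝ) ^ A * Real.cos (ε * π)
        = -(-1:ℝ) ^ A * (1 + Real.cos (ε * π)) := by ring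
    rw [hΔ, abs_mul, abs_mul, habsr, one_mul, abs_mul, abs_neg]
    have h1 : |(-1:ℝ) ^ A| = 1 := by
      rcases Int.even_or_odd A with hpar | hpar
      · rw [hpar.neg_one_zpow]; norm_num
      · rw [hpar.neg_one_zpow]; norm_num
    rw [h1, one_mul, abs_of_pos (by positivity : (0:ℝ) < (1/14:ℝ) ^ m),
      abs_of_nonneg (by linarith : (0:ℝ) ≤ 1 + Real.cos (ε * π))]
    nlinarith [pow_pos (show (0:ℝ) < 1/14 by norm_num) m]
  -- finite part
  have hsumq : ∑ j ∈ Finset.range J, (21/2:ℝ) ^ s j ≤ 2/19 * (21/2:ℝ) ^ m := by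
    have him : ∑ j ∈ Finset.range J, (21/2:ℝ) ^ s j
        ≤ ∑ n ∈ Finset.range m, (21/2:ℝ) ^ n := by
      have heq : ∑ j ∈ Finset.range J, (21/2:ℝ) ^ s j
          = ∑ n ∈ (Finset.range J).image s, (21/2:ℝ) ^ n :=
        (Finset.sum_image (f := fun n => (21/2:ℝ) ^ n) (g := s)
          (fun a _ b _ h => hs.injective h)).symm
      rw [heq]
      apply Finset.sum_le_sum_of_subset_of_nonneg
      · intro n hn
        simp only [Finset.mem_image, Finset.mem_range] at hn ⊢
        obtain ⟨j, hj, rfl⟩ := hn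
        exact hs hj
      · intro i _ _; positivity
    have hgeom : ∑ n ∈ Finset.range m, (21/2:ℝ) ^ n = ((21/2:ℝ) ^ m - 1) / (21/2 - 1) :=
      geom_sum_eq (by norm_num) m
    rw [hgeom] at him
    have : ((21/2:ℝ) ^ m - 1) / (21/2 - 1) ≤ 2/19 * (21/2:ℝ) ^ m := by
      have : (0:ℝ) ≤ (21/2:ℝ) ^ m := by positivity
      rw [div_le_iff₀ (by norm_num : (0:ℝ) < 21/2 - 1)]
      nlinarith
    linarith
  have hfin : |∑ j ∈ Finset.range J, g j| ≤ π * |y - x| * (2/19 * (21/2:ℝ) ^ m) := by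
    calc |∑ j ∈ Finset.range J, g j| ≤ ∑ j ∈ Finset.range J, |g j| :=
        Finset.abs_sum_le_sum_abs _ _
      _ ≤ ∑ j ∈ Finset.range J, (21/2:ℝ) ^ s j * (π * |y - x|) := by
        apply Finset.sum_le_sum
        intro j _
        simp only [hg]
        rw [abs_mul, abs_mul, habsr, one_mul,
          abs_of_pos (by positivity : (0:ℝ) < (1/14:ℝ) ^ s j)]
        have h1 : |Real.cos ((147:ℝ) ^ s j * π * y) - Real.cos ((147:ℝ) ^ s j * π * x)|
            ≤ (147:ℝ) ^ s j * π * |y - x| := by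
          refine (cos_diff_le _ _).trans_eq ?_
          rw [show (147:ℝ) ^ s j * π * y - (147:ℝ) ^ s j * π * x
              = (147:ℝ) ^ s j * π * (y - x) by ring, abs_mul,
            abs_of_pos (by positivity : (0:ℝ) < (147:ℝ) ^ s j * π)]
        calc (1/14:ℝ) ^ s j * |Real.cos ((147:ℝ) ^ s j * π * y)
              - Real.cos ((147:ℝ) ^ s j * π * x)|
            ≤ (1/14:ℝ) ^ s j * ((147:ℝ) ^ s j * π * |y - x|) := by
              apply mul_le_mul_of_nonneg_left h1 (by positivity)
          _ = (21/2:ℝ) ^ s j * (π * |y - x|) := by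
              rw [show (21/2:ℝ) ^ s j = (1/14:ℝ) ^ s j * (147:ℝ) ^ s j by
                rw [← mul_pow]; norm_num]
              ring
      _ = (∑ j ∈ Finset.range J, (21/2:ℝ) ^ s j) * (π * |y - x|) :=
        (Finset.sum_mul _ _ _).symm
      _ ≤ 2/19 * (21/2:ℝ) ^ m * (π * |y - x|) := by
        apply mul_le_mul_of_nonneg_right hsumq (by positivity)
      _ = π * |y - x| * (2/19 * (21/2:ℝ) ^ m) := by ring
  -- tail
  have htb : ∀ j, |g (j + (J+1))| ≤ 2 * (1/14:ℝ) ^ (m+1) * (1/14) ^ j := by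
    intro j
    refine (hgb _).trans ?_
    have h1 : m + 1 + j ≤ s (j + (J+1)) := by
      have h2 := sm_add_le s hs J (j+1)
      have h3 : J + (j+1) = j + (J+1) := by omega
      rw [h3] at h2
      omega
    have h4 : (1/14:ℝ) ^ s (j + (J+1)) ≤ (1/14) ^ (m+1+j) :=
      pow_le_pow_of_le_one (by norm_num) (by norm_num) h1
    calc 2 * (1/14:ℝ) ^ s (j + (J+1)) ≤ 2 * (1/14:ℝ) ^ (m+1+j) := by linarith
      _ = 2 * (1/14:ℝ) ^ (m+1) * (1/14) ^ j := by rw [pow_add]; ring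
  have hsumtail2 : Summable (fun j => 2 * (1/14:ℝ) ^ (m+1) * (1/14) ^ j) :=
    (summable_geometric_of_lt_one (by norm_num) (by norm_num)).mul_left _
  have hsumtail1 : Summable (fun j => |g (j + (J+1))|) :=
    Summable.of_nonneg_of_le (fun j => abs_nonneg _) htb hsumtail2
  have htail : |∑' j, g (j + (J+1))| ≤ 28/13 * (1/14:ℝ) ^ (m+1) := by
    calc |∑' j, g (j + (J+1))| ≤ ∑' j, |g (j + (J+1))| := by
          simpa [Real.norm_eq_abs] using
            norm_tsum_le_tsum_norm (f := fun j => g (j + (J+1)))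
              (by simpa [Real.norm_eq_abs] using hsumtail1)
      _ ≤ ∑' j, 2 * (1/14:ℝ) ^ (m+1) * (1/14) ^ j := Summable.tsum_le_tsum htb hsumtail1 hsumtail2
      _ = 2 * (1/14:ℝ) ^ (m+1) * (1 - 1/14)⁻¹ := by
          rw [tsum_mul_left, tsum_geometric_of_lt_one (by norm_num) (by norm_num)]
      _ = 28/13 * (1/14:ℝ) ^ (m+1) := by
          rw [show ((1:ℝ) - 1/14)⁻¹ = 14/13 by norm_num]; ring
  -- combine
  have hsplit : ∑ j ∈ Finset.range (J+1), g j + ∑' j, g (j + (J+1)) = ∑' j, g j :=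
    Summable.sum_add_tsum_nat_add (J+1) hsumg
  have hrange : ∑ j ∈ Finset.range (J+1), g j = ∑ j ∈ Finset.range J, g j + g J :=
    Finset.sum_range_succ g J
  have hlower : (1/14:ℝ) ^ m - π * |y - x| * (2/19 * (21/2:ℝ) ^ m)
      - 28/13 * (1/14:ℝ) ^ (m+1) ≤ |∑' j, g j| := by
    rw [← hsplit, hrange]
    set u := ∑ j ∈ Finset.range J, g j
    set v := g J
    set w := ∑' j, g (j + (J+1))
    have h1 : |v| ≤ |u + v + w| + |u| + |w| := by
      calc |v| = |(u + v + w) - (u + w)| := by ring_nf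
        _ ≤ |u + v + w| + |u + w| := abs_sub _ _
        _ ≤ |u + v + w| + (|u| + |w|) := by linarith [abs_add_le u w]
        _ = |u + v + w| + |u| + |w| := by ring
    linarith [hgJ, hfin, htail]
  -- final computation
  rw [abs_div, lt_div_iff₀ hd0]
  have hqbm : (21/2:ℝ) ^ m = (1/14:ℝ) ^ m * bm := by
    rw [hbm, ← mul_pow]; norm_num
  have ht : (21/2:ℝ) ^ m * |y - x| ≤ 3/2 * (1/14:ℝ) ^ m := by
    calc (21/2:ℝ) ^ m * |y - x| ≤ (21/2:ℝ) ^ m * (3/2 / bm) := by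
          apply mul_le_mul_of_nonneg_left hdle (by positivity)
      _ = 3/2 * (1/14:ℝ) ^ m := by
          rw [hqbm]; field_simp
  have hπ : π < 3.15 := Real.pi_lt_d2
  have hπ0 : 0 < π := Real.pi_pos
  have hpos : (0:ℝ) < (1/14:ℝ) ^ m := by positivity
  have hqd0 : (0:ℝ) ≤ (21/2:ℝ) ^ m * |y - x| := by positivity
  calc B * |y - x| < 1/50 * (21/2:ℝ) ^ m * |y - x| := by
        apply mul_lt_mul_of_pos_right hBm hd0
    _ ≤ |∑' j, g j| := by
        refine le_trans ?_ hlower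
        have e1 : (1/14:ℝ) ^ (m+1) = (1/14:ℝ) ^ m * (1/14) := pow_succ _ _
        nlinarith [ht, hqd0, hd0, mul_le_mul_of_nonneg_left ht hπ0.le,
          mul_nonneg hπ0.le hqd0]
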